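/- Let ℓ ≥ 3. Then for all real x with 0 < x < 1/2: x·U_{ℓ−1}(1/(2x)) · Σ_{n≥0} b(n)·x^n = x·(Σ_{k=0}^{ℓ−1} U_k(1/(2x))) · Σ_{n≥0} c(n, ℓ−1)·x^n + Σ_{k=0}^{ℓ−2} U_k(1/(2x)), where all series converge absolutely. -/

import Mathlib

open Filter Real

/-- `aa n m` = number of length-`n` paths on `ℤ≥0` with steps `±1` starting at `0`
and ending at `m`. -/
def aa : ℕ → ℕ → ℕ
  | 0, m => if m = 0 then 1 else 0
  | n+1, m => aa n (m+1) + (if m = 0 then 0 else aa n (m-1))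

/-- `aSum n = Σ_{m=0}^n aa n m`. -/
def aSum (n : ℕ) : ℕ := ∑ m ∈ Finset.range (n+1), aa n m

/-- The modular variant `b(n,m)` depending on `ℓ`:
`b(n,m) = a(n,m)` if `m ≡ ℓ-1 (mod ℓ)`; otherwise `b(0,m) = δ_{m,0}`, and for `n ≥ 1`,
`b(n,m) = b(n-1,m-1) + b(n-1,m+1)` if `m % ℓ < ℓ-2` (negative-index terms are `0`),
and `b(n,m) = b(n-1,m-1)` if `m ≡ ℓ-2 (mod ℓ)`. -/
def bb (ℓ : ℕ) : ℕ → ℕ → ℕ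
  | 0, m => if m % ℓ = ℓ - 1 then aa 0 m else if m = 0 then 1 else 0
  | n+1, m =>
    if m % ℓ = ℓ - 1 then aa (n+1) m
    else if m % ℓ = ℓ - 2 then (if m = 0 then 0 else bb ℓ n (m-1))
    else (if m = 0 then 0 else bb ℓ n (m-1)) + bb ℓ n (m+1)

/-- `bSum ℓ n = Σ_{m=0}^n bb ℓ n m`. -/
def bSum (ℓ : ℕ) (n : ℕ) : ℕ := ∑ m ∈ Finset.range (n+1), bb ℓ n m

/-- `cc ℓ n r = Σ_{m ≥ 0, m ≡ r (mod ℓ)} aa n m` (finite since `aa n m = 0` for `m > n`). -/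
def cc (ℓ : ℕ) (n r : ℕ) : ℕ :=
  ∑ m ∈ Finset.range (n+1), if m % ℓ = r then aa n m else 0

/-- `ww ℓ n = Σ_{0 ≤ m ≤ n, m ≡ ℓ-1 (mod ℓ)} bb ℓ n m`. -/
def ww (ℓ : ℕ) (n : ℕ) : ℕ :=
  ∑ m ∈ Finset.range (n+1), if m % ℓ = ℓ - 1 then bb ℓ n m else 0

lemma aa_le_two_pow (n m : ℕ) : aa n m ≤ 2 ^ n := by
  induction n generalizing m with
  | zero => rw [aa]; split <;> simp
  | succ n ih =>
      rw [aa, pow_succ, mul_two]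
      gcongr
      · exact ih _
      · split
        · positivity
        · exact ih _

lemma aa_eq_zero {n m : ℕ} (h : n < m) : aa n m = 0 := by
  induction n generalizing m with
  | zero => rw [aa]; simp [show m ≠ 0 by omega]
  | succ n ih =>
      rw [aa]
      have h1 : aa n (m+1) = 0 := ih (by omega)
      have hm : m ≠ 0 := by omega
      simp [h1, hm, ih (show n < m - 1 by omega)]

lemma bb_le_two_pow (ℓ n m : ℕ) : bb ℓ n m ≤ 2 ^ n := by
  induction n generalizing m with
  | zero => rw [bb]; split
            · rw [aa]; split <;> simp
            · split <;> simp
  | succ n ih =>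
      rw [bb]
      split
      · exact aa_le_two_pow _ _
      · split
        · rw [pow_succ, mul_two]
          split
          · positivity
          · exact le_trans (ih _) (by nlinarith [pow_pos (show (0:ℕ) < 2 by norm_num) n])
        · rw [pow_succ, mul_two]
          gcongr
          · split
            · positivity
            · exact ih _
          · exact ih _

lemma bb_eq_zero (ℓ : ℕ) {n m : ℕ} (h : n < m) : bb ℓ n m = 0 := by
  induction n generalizing m with
  | zero =>
      rw [bb]
      have hm : m ≠ 0 := by omega
      simp [hm, aa_eq_zero h]
  | succ n ih =>
      rw [bb]
      have hm : m ≠ 0 := by omega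
      split
      · exact aa_eq_zero h
      · split
        · simp [hm, ih (show n < m - 1 by omega)]
        · simp [hm, ih (show n < m - 1 by omega), ih (show n < m + 1 by omega)]

lemma bb_mod_eq_aa (ℓ n m : ℕ) (h : m % ℓ = ℓ - 1) : bb ℓ n m = aa n m := by
  cases n <;> simp [bb, h]

section Cols

variable {x : ℝ}

lemma sumcol {g : ℕ → ℕ} (hg : ∀ n, g n ≤ 2 ^ n) (hx0 : 0 < x) (hx : x < 1/2) :
    Summable fun n : ℕ => (g n : ℝ) * x ^ n := by
  refine Summable.of_nonneg_of_le (fun n => by positivity) (fun n => ?_)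
    (summable_geometric_of_lt_one (by linarith) (by linarith : 2*x < 1))
  calc (g n : ℝ) * x ^ n ≤ (2:ℝ) ^ n * x ^ n := by
        gcongr
        exact_mod_cast hg n
    _ = (2*x) ^ n := (mul_pow 2 x n).symm

lemma sumcol_aa (hx0 : 0 < x) (hx : x < 1/2) (m : ℕ) :
    Summable fun n : ℕ => (aa n m : ℝ) * x ^ n :=
  sumcol (fun n => aa_le_two_pow n m) hx0 hx

lemma sumcol_bb (ℓ : ℕ) (hx0 : 0 < x) (hx : x < 1/2) (m : ℕ) :
    Summable fun n : ℕ => (bb ℓ n m : ℝ) * x ^ n :=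
  sumcol (fun n => bb_le_two_pow ℓ n m) hx0 hx

lemma col_le {g : ℕ → ℕ} {m : ℕ} (hx0 : 0 < x) (hx : x < 1/2)
    (hg : ∀ n, g n ≤ 2 ^ n) (hz : ∀ n, n < m → g n = 0) :
    ∑' n : ℕ, (g n : ℝ) * x ^ n ≤ (2*x) ^ m * (1 - 2*x)⁻¹ := by
  have h20 : (0:ℝ) ≤ 2*x := by linarith
  have h21 : 2*x < 1 := by linarith
  have hgeo : Summable fun n : ℕ => (2*x) ^ n := summable_geometric_of_lt_one h20 h21
  have hshift : ∑' n : ℕ, (g n : ℝ) * x ^ n = ∑' n : ℕ, (g (n+m) : ℝ) * x ^ (n+m) := by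
    refine (Function.Injective.tsum_eq (add_left_injective m) ?_).symm
    intro n hn
    rcases lt_or_ge n m with h | h
    · exact absurd (by simp [hz n h]) hn
    · exact ⟨n - m, Nat.sub_add_cancel h⟩
  rw [hshift]
  calc ∑' n : ℕ, (g (n+m) : ℝ) * x ^ (n+m)
      ≤ ∑' n : ℕ, (2*x) ^ (n+m) := by
        refine Summable.tsum_le_tsum (fun n => ?_) ((sumcol hg hx0 hx).comp_injective (add_left_injective m)) ?_
        · calc (g (n+m) : ℝ) * x ^ (n+m) ≤ (2:ℝ) ^ (n+m) * x ^ (n+m) := by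
                gcongr; exact_mod_cast hg (n+m)
            _ = (2*x) ^ (n+m) := (mul_pow _ _ _).symm
        · simpa only [pow_add] using hgeo.mul_right ((2*x) ^ m)
    _ = (2*x) ^ m * (1 - 2*x)⁻¹ := by
        simp only [pow_add]
        rw [tsum_mul_right, tsum_geometric_of_lt_one h20 h21, mul_comm]

end Cols

noncomputable def al (x : ℝ) (m : ℕ) : ℝ := ∑' n : ℕ, (aa n m : ℝ) * x ^ n

noncomputable def be (ℓ : ℕ) (x : ℝ) (m : ℕ) : ℝ := ∑' n : ℕ, (bb ℓ n m : ℝ) * x ^ n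

section Rec

variable {ℓ : ℕ} {x : ℝ}

lemma al_nonneg (x : ℝ) (hx0 : 0 < x) (m : ℕ) : 0 ≤ al x m :=
  tsum_nonneg fun n => by positivity

lemma be_nonneg (ℓ : ℕ) (hx0 : 0 < x) (m : ℕ) : 0 ≤ be ℓ x m :=
  tsum_nonneg fun n => by positivity

lemma al_le (hx0 : 0 < x) (hx : x < 1/2) (m : ℕ) :
    al x m ≤ (2*x) ^ m * (1 - 2*x)⁻¹ :=
  col_le hx0 hx (fun n => aa_le_two_pow n m) (fun n hn => aa_eq_zero hn)

lemma be_le (hx0 : 0 < x) (hx : x < 1/2) (m : ℕ) :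
    be ℓ x m ≤ (2*x) ^ m * (1 - 2*x)⁻¹ :=
  col_le hx0 hx (fun n => bb_le_two_pow ℓ n m) (fun n hn => bb_eq_zero ℓ hn)

lemma be_eq_al (m : ℕ) (h : m % ℓ = ℓ - 1) : be ℓ x m = al x m := by
  unfold be al
  exact tsum_congr fun n => by rw [bb_mod_eq_aa ℓ n m h]

lemma be_rec_top (hℓ : 3 ≤ ℓ) (hx0 : 0 < x) (hx : x < 1/2) (m : ℕ) (hm : m % ℓ = ℓ - 2) :
    be ℓ x m = x * be ℓ x (m-1) := by
  have hm0 : m ≠ 0 := by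
    intro h; subst h; simp at hm; omega
  have hne : ¬ (m % ℓ = ℓ - 1) := by omega
  rw [be, Summable.tsum_eq_zero_add (sumcol_bb ℓ hx0 hx m)]
  have h0 : bb ℓ 0 m = 0 := by rw [bb]; simp [hne, hm0]
  have h1 : ∀ n, bb ℓ (n+1) m = bb ℓ n (m-1) := by
    intro n; rw [bb]; simp [hm, hm0, show ℓ-2 ≠ ℓ-1 by omega]
  simp only [h0, h1, Nat.cast_zero, pow_zero, mul_one, zero_add, pow_succ]
  rw [show ∀ f : ℕ → ℝ, (∑' n, f n * (x^n * x)) = ∑' n, (f n * x^n) * x from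
    fun f => tsum_congr fun n => by ring, tsum_mul_right, mul_comm, be]

lemma be_rec_mid (hℓ : 3 ≤ ℓ) (hx0 : 0 < x) (hx : x < 1/2) (m : ℕ) (hm0 : m ≠ 0)
    (h1 : ¬ (m % ℓ = ℓ - 1)) (h2 : ¬ (m % ℓ = ℓ - 2)) :
    be ℓ x m = x * be ℓ x (m-1) + x * be ℓ x (m+1) := by
  rw [be, Summable.tsum_eq_zero_add (sumcol_bb ℓ hx0 hx m)]
  have h0 : bb ℓ 0 m = 0 := by rw [bb]; simp [h1, hm0]
  have hr : ∀ n, bb ℓ (n+1) m = bb ℓ n (m-1) + bb ℓ n (m+1) := by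
    intro n; rw [bb]; simp [h1, h2, hm0]
  simp only [h0, hr, Nat.cast_zero, pow_zero, mul_one, zero_add, Nat.cast_add, pow_succ]
  rw [show (∑' n : ℕ, ((bb ℓ n (m-1) : ℝ) + (bb ℓ n (m+1) : ℝ)) * (x^n * x))
      = ∑' n : ℕ, (((bb ℓ n (m-1) : ℝ) * x^n) * x + ((bb ℓ n (m+1) : ℝ) * x^n) * x) from
    tsum_congr fun n => by ring]
  rw [Summable.tsum_add ((sumcol_bb ℓ hx0 hx (m-1)).mul_right x) ((sumcol_bb ℓ hx0 hx (m+1)).mul_right x),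
    tsum_mul_right, tsum_mul_right, be, be]
  ring

lemma be_rec_zero (hℓ : 3 ≤ ℓ) (hx0 : 0 < x) (hx : x < 1/2) :
    be ℓ x 0 = 1 + x * be ℓ x 1 := by
  rw [be, Summable.tsum_eq_zero_add (sumcol_bb ℓ hx0 hx 0)]
  have h0 : bb ℓ 0 0 = 1 := by rw [bb]; simp [show ¬ (0 = ℓ - 1) by omega]
  have hr : ∀ n, bb ℓ (n+1) 0 = bb ℓ n 1 := by
    intro n; rw [bb]
    simp [show ¬ (0 = ℓ - 1) by omega, show ¬ (0 = ℓ - 2) by omega]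
  simp only [h0, hr, Nat.cast_one, pow_zero, mul_one, pow_succ]
  rw [show ∀ f : ℕ → ℝ, (∑' n, f n * (x^n * x)) = ∑' n, (f n * x^n) * x from
    fun f => tsum_congr fun n => by ring, tsum_mul_right, mul_comm (∑' n : ℕ, (bb ℓ n 1 : ℝ) * x^n) x, be]

end Rec

noncomputable def vv (x : ℝ) : ℕ → ℝ
  | 0 => 1
  | 1 => 1
  | (k+2) => vv x (k+1) - x^2 * vv x k

lemma vv_eq_cheb {x : ℝ} (hx0 : 0 < x) :
    ∀ k : ℕ, vv x k = x ^ k * (Polynomial.Chebyshev.U ℝ (k : ℤ)).eval (1 / (2*x)) := by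
  have hxne : x ≠ 0 := ne_of_gt hx0
  intro k
  induction k using Nat.twoStepInduction with
  | zero => simp [vv, Polynomial.Chebyshev.U_zero]
  | one =>
      simp only [vv, Nat.cast_one, Polynomial.Chebyshev.U_one, pow_one]
      rw [Polynomial.eval_mul, Polynomial.eval_ofNat, Polynomial.eval_X]
      field_simp
  | more k ih1 ih2 =>
      have hcast : ((k + 2 : ℕ) : ℤ) = (k : ℤ) + 2 := by push_cast; ring
      rw [show vv x (k+2) = vv x (k+1) - x^2 * vv x k from rfl, ih1, ih2, hcast,
        Polynomial.Chebyshev.U_add_two]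
      have hcast1 : ((k + 1 : ℕ) : ℤ) = (k : ℤ) + 1 := by push_cast; ring
      rw [hcast1]
      simp only [Polynomial.eval_sub, Polynomial.eval_mul, Polynomial.eval_ofNat,
        Polynomial.eval_X]
      field_simp
      ring

lemma core_block {ℓ : ℕ} {x : ℝ} (hℓ : 3 ≤ ℓ) (hx0 : 0 < x) (hx : x < 1/2)
    (φ : ℕ → ℝ) (e : ℝ)
    (htop : φ (ℓ-2) = x * φ (ℓ-3))
    (hmid : ∀ r, r + 4 ≤ ℓ → φ (r+1) = x * φ r + x * φ (r+2))
    (hbot : φ 0 = e + x * φ 1) :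
    ∀ r, r ≤ ℓ - 2 → vv x (ℓ-1) * φ r = e * x ^ r * vv x (ℓ-2-r) := by
  set h : ℕ → ℝ := fun r => vv x (ℓ-1) * φ r - e * x ^ r * vv x (ℓ-2-r) with hh
  have c3 : h 0 = x * h 1 := by
    obtain ⟨k, rfl⟩ : ∃ k, ℓ = k + 3 := ⟨ℓ - 3, by omega⟩
    have e1 : k + 3 - 1 = k + 2 := by omega
    have e2 : k + 3 - 2 - 0 = k + 1 := by omega
    have e3 : k + 3 - 2 - 1 = k := by omega
    simp only [hh, e1, e2, e3, pow_zero, pow_one]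
    rw [hbot, show vv x (k+2) = vv x (k+1) - x^2 * vv x k from rfl]
    ring
  have c1 : h (ℓ-2) = x * h (ℓ-3) := by
    obtain ⟨k, rfl⟩ : ∃ k, ℓ = k + 3 := ⟨ℓ - 3, by omega⟩
    rw [show k + 3 - 2 = k + 1 by omega, show k + 3 - 3 = k by omega] at htop ⊢
    simp only [hh]
    rw [show k + 3 - 2 - (k+1) = 0 by omega, show k + 3 - 2 - k = 1 by omega, htop,
      show vv x 0 = 1 from rfl, show vv x 1 = 1 from rfl, pow_succ]
    ring
  have c2 : ∀ r, r + 4 ≤ ℓ → h (r+1) = x * h r + x * h (r+2) := by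
    intro r hr
    obtain ⟨k, rfl⟩ : ∃ k, ℓ = r + 4 + k := ⟨ℓ - (r+4), by omega⟩
    have e1 : r + 4 + k - 2 - (r+1) = k + 1 := by omega
    have e2 : r + 4 + k - 2 - r = k + 2 := by omega
    have e3 : r + 4 + k - 2 - (r+2) = k := by omega
    simp only [hh, e1, e2, e3]
    rw [hmid r (by omega), show vv x (k+2) = vv x (k+1) - x^2 * vv x k from rfl]
    ring_nf
  -- max argument
  have hne : (Finset.range (ℓ-1)).Nonempty := ⟨0, Finset.mem_range.2 (by omega)⟩
  set M : ℝ := (Finset.range (ℓ-1)).sup' hne fun r => |h r| with hM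
  have hle : ∀ r, r < ℓ - 1 → |h r| ≤ M :=
    fun r hr => Finset.le_sup' (fun r => |h r|) (Finset.mem_range.2 hr)
  have hM0 : 0 ≤ M := le_trans (abs_nonneg (h 0)) (hle 0 (by omega))
  have key : ∀ r, r < ℓ - 1 → |h r| ≤ 2 * x * M := by
    intro r hr
    rcases Nat.eq_zero_or_pos r with rfl | hrpos
    · rw [c3, abs_mul, abs_of_pos hx0]
      have := hle 1 (by omega)
      nlinarith
    · rcases eq_or_ne r (ℓ-2) with rfl | hrne
      · rw [c1, abs_mul, abs_of_pos hx0]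
        have := hle (ℓ-3) (by omega)
        nlinarith
      · obtain ⟨r', rfl⟩ : ∃ r', r = r' + 1 := ⟨r - 1, by omega⟩
        have hr4 : r' + 4 ≤ ℓ := by omega
        rw [c2 r' hr4]
        calc |x * h r' + x * h (r'+2)| ≤ |x * h r'| + |x * h (r'+2)| := abs_add_le _ _
          _ = x * |h r'| + x * |h (r'+2)| := by rw [abs_mul, abs_mul, abs_of_pos hx0]
          _ ≤ 2 * x * M := by
              have h1 := hle r' (by omega)
              have h2 := hle (r'+2) (by omega)
              nlinarith
  obtain ⟨r₀, hr₀, hMr⟩ := Finset.exists_mem_eq_sup' hne fun r => |h r|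
  have hMle : M ≤ 2 * x * M :=
    (hM.trans hMr).le.trans (key r₀ (Finset.mem_range.1 hr₀))
  have hMz : M ≤ 0 := by nlinarith
  intro r hrle
  have hz : h r = 0 := abs_nonpos_iff.mp (le_trans (hle r (by omega)) hMz)
  have := sub_eq_zero.mp hz
  linarith [this]

section Fubini

variable {ℓ : ℕ} {x : ℝ}

lemma be_summable (hℓ : 3 ≤ ℓ) (hx0 : 0 < x) (hx : x < 1/2) :
    Summable fun m : ℕ => be ℓ x m := by
  refine Summable.of_nonneg_of_le (fun m => be_nonneg ℓ hx0 m) (fun m => be_le hx0 hx m) ?_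
  exact (summable_geometric_of_lt_one (by linarith) (by linarith)).mul_right _

lemma al_summable_shift (hℓ : 3 ≤ ℓ) (hx0 : 0 < x) (hx : x < 1/2) :
    Summable fun j : ℕ => al x (j * ℓ + (ℓ - 1)) := by
  refine Summable.of_nonneg_of_le (fun j => al_nonneg x hx0 _) (fun j => ?_)
    ((summable_geometric_of_lt_one (by linarith : (0:ℝ) ≤ 2*x)
      (by linarith : 2*x < 1)).mul_right ((1 - 2*x)⁻¹))
  calc al x (j * ℓ + (ℓ - 1)) ≤ (2*x) ^ (j * ℓ + (ℓ - 1)) * (1 - 2*x)⁻¹ := al_le hx0 hx _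
    _ ≤ (2*x) ^ j * (1 - 2*x)⁻¹ := by
        have hj : j ≤ j * ℓ + (ℓ - 1) :=
          le_trans (Nat.le_mul_of_pos_right j (by omega)) (Nat.le_add_right _ _)
        exact mul_le_mul_of_nonneg_right
          (pow_le_pow_of_le_one (by linarith) (by linarith) hj)
          (inv_nonneg.mpr (by linarith))

lemma fubini_b (hℓ : 3 ≤ ℓ) (hx0 : 0 < x) (hx : x < 1/2) :
    Summable (fun n : ℕ => (bSum ℓ n : ℝ) * x ^ n) ∧
      ∑' n : ℕ, (bSum ℓ n : ℝ) * x ^ n = ∑' m : ℕ, be ℓ x m := by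
  set f : ℕ → ℕ → ℝ := fun m n => (bb ℓ n m : ℝ) * x ^ n with hf
  have h1 : ∀ m, Summable (f m) := fun m => sumcol_bb ℓ hx0 hx m
  have h2 : ∀ n, Summable fun m => f m n := by
    intro n
    refine summable_of_ne_finset_zero (s := Finset.range (n+1)) (fun m hm => ?_)
    have : n < m := by simp only [Finset.mem_range, not_lt] at hm; omega
    simp [hf, bb_eq_zero ℓ this]
  have hnn : ∀ p : ℕ × ℕ, 0 ≤ Function.uncurry f p :=
    fun p => mul_nonneg (Nat.cast_nonneg _) (le_of_lt (pow_pos hx0 _))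
  have huncur : Summable (Function.uncurry f) := by
    rw [summable_prod_of_nonneg hnn]
    exact ⟨h1, be_summable hℓ hx0 hx⟩
  have hcomm : ∑' n : ℕ, ∑' m : ℕ, f m n = ∑' m : ℕ, ∑' n : ℕ, f m n :=
    Summable.tsum_comm' huncur h1 h2
  have hrow : ∀ n : ℕ, ∑' m : ℕ, f m n = (bSum ℓ n : ℝ) * x ^ n := by
    intro n
    rw [tsum_eq_sum (s := Finset.range (n+1)) (fun m hm => by
      have : n < m := by simp only [Finset.mem_range, not_lt] at hm; omega
      simp [hf, bb_eq_zero ℓ this])]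
    rw [← Finset.sum_mul, bSum]
    push_cast
    ring
  constructor
  · have hsn : Summable fun n : ℕ => ∑' m : ℕ, f m n := by
      have := (summable_prod_of_nonneg (f := fun p : ℕ × ℕ => f p.2 p.1)
        (fun p => hnn (p.2, p.1))).mp (huncur.prod_symm.congr (fun p => rfl))
      exact this.2
    exact hsn.congr hrow
  · calc ∑' n : ℕ, (bSum ℓ n : ℝ) * x ^ n = ∑' n : ℕ, ∑' m : ℕ, f m n :=
          (tsum_congr hrow).symm
      _ = ∑' m : ℕ, ∑' n : ℕ, f m n := hcomm
      _ = ∑' m : ℕ, be ℓ x m := rfl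

lemma fubini_c (hℓ : 3 ≤ ℓ) (hx0 : 0 < x) (hx : x < 1/2) :
    Summable (fun n : ℕ => (cc ℓ n (ℓ - 1) : ℝ) * x ^ n) ∧
      ∑' n : ℕ, (cc ℓ n (ℓ - 1) : ℝ) * x ^ n = ∑' j : ℕ, al x (j * ℓ + (ℓ - 1)) := by
  set f : ℕ → ℕ → ℝ := fun m n => (if m % ℓ = ℓ - 1 then (aa n m : ℝ) else 0) * x ^ n with hf
  have h1 : ∀ m, Summable (f m) := by
    intro m
    by_cases h : m % ℓ = ℓ - 1
    · simp only [hf, h, if_true]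
      exact sumcol_aa hx0 hx m
    · simp only [hf, h, if_false]
      simpa using summable_zero
  have hcol : ∀ m, ∑' n : ℕ, f m n = if m % ℓ = ℓ - 1 then al x m else 0 := by
    intro m
    by_cases h : m % ℓ = ℓ - 1 <;> simp [hf, h, al]
  have h2 : ∀ n, Summable fun m => f m n := by
    intro n
    refine summable_of_ne_finset_zero (s := Finset.range (n+1)) (fun m hm => ?_)
    have : n < m := by simp only [Finset.mem_range, not_lt] at hm; omega
    simp [hf, aa_eq_zero this]
  have hnn : ∀ p : ℕ × ℕ, 0 ≤ Function.uncurry f p := by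
    intro p
    refine mul_nonneg ?_ (by positivity)
    split
    · positivity
    · exact le_refl 0
  have huncur : Summable (Function.uncurry f) := by
    rw [summable_prod_of_nonneg hnn]
    refine ⟨h1, ?_⟩
    refine Summable.of_nonneg_of_le (fun m => ?_) (fun m => ?_)
      ((summable_geometric_of_lt_one (by linarith : (0:ℝ) ≤ 2*x)
        (by linarith : 2*x < 1)).mul_right ((1 - 2*x)⁻¹))
    · exact tsum_nonneg fun n => hnn (m, n)
    · have hc : ∑' n : ℕ, f m n = if m % ℓ = ℓ - 1 then al x m else 0 := hcol m
      refine le_trans (le_of_eq hc) ?_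
      split
      · exact al_le hx0 hx m
      · exact mul_nonneg (by positivity) (inv_nonneg.mpr (by linarith))
  have hrow : ∀ n : ℕ, ∑' m : ℕ, f m n = (cc ℓ n (ℓ - 1) : ℝ) * x ^ n := by
    intro n
    rw [tsum_eq_sum (s := Finset.range (n+1)) (fun m hm => by
      have : n < m := by simp only [Finset.mem_range, not_lt] at hm; omega
      simp [hf, aa_eq_zero this])]
    rw [← Finset.sum_mul, cc]
    push_cast [apply_ite (Nat.cast : ℕ → ℝ)]
    ring
  have hcomm : ∑' n : ℕ, ∑' m : ℕ, f m n = ∑' m : ℕ, ∑' n : ℕ, f m n :=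
    Summable.tsum_comm' huncur h1 h2
  constructor
  · have hsn : Summable fun n : ℕ => ∑' m : ℕ, f m n := by
      have := (summable_prod_of_nonneg (f := fun p : ℕ × ℕ => f p.2 p.1)
        (fun p => hnn (p.2, p.1))).mp (huncur.prod_symm.congr (fun p => rfl))
      exact this.2
    exact hsn.congr hrow
  · rw [← tsum_congr hrow, hcomm, tsum_congr hcol]
    refine (Function.Injective.tsum_eq (g := fun j => j * ℓ + (ℓ - 1)) ?_ ?_).symm.trans ?_
    · intro a b hab
      simp only at hab
      have : a * ℓ = b * ℓ := by omega
      exact Nat.eq_of_mul_eq_mul_right (by omega) this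
    · intro m hm
      have hmod : m % ℓ = ℓ - 1 := by
        by_contra h
        simp [h] at hm
      refine ⟨m / ℓ, ?_⟩
      have h1 := Nat.div_add_mod m ℓ
      rw [hmod] at h1
      simp only
      rw [mul_comm]
      exact h1
    · refine tsum_congr fun j => ?_
      rw [if_pos (by rw [add_comm, Nat.add_mul_mod_self_right]; exact Nat.mod_eq_of_lt (by omega))]
end Fubini

section Blocks

variable {ℓ : ℕ} {x : ℝ}

lemma regroup (hℓ : 3 ≤ ℓ) (hx0 : 0 < x) (hx : x < 1/2) :
    ∑' m : ℕ, be ℓ x m = ∑' j : ℕ, ∑ r ∈ Finset.range ℓ, be ℓ x (j * ℓ + r) := by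
  haveI : NeZero ℓ := ⟨by omega⟩
  have hbe := be_summable hℓ hx0 hx
  have hE : Summable fun p : ℕ × Fin ℓ => be ℓ x ((Nat.divModEquiv ℓ).symm p) :=
    ((Nat.divModEquiv ℓ).symm.summable_iff).mpr hbe
  calc ∑' m : ℕ, be ℓ x m
      = ∑' p : ℕ × Fin ℓ, be ℓ x ((Nat.divModEquiv ℓ).symm p) :=
        ((Nat.divModEquiv ℓ).symm.tsum_eq (be ℓ x)).symm
    _ = ∑' j : ℕ, ∑' r : Fin ℓ, be ℓ x ((Nat.divModEquiv ℓ).symm (j, r)) :=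
        Summable.tsum_prod' hE (fun j => Summable.of_finite)
    _ = ∑' j : ℕ, ∑ r ∈ Finset.range ℓ, be ℓ x (j * ℓ + r) := by
        refine tsum_congr fun j => ?_
        rw [tsum_fintype]
        simp only [Nat.divModEquiv_symm_apply]
        exact Fin.sum_univ_eq_sum_range (fun r => be ℓ x (j * ℓ + r)) ℓ

lemma block_eq (hℓ : 3 ≤ ℓ) (hx0 : 0 < x) (hx : x < 1/2) (j : ℕ) :
    vv x (ℓ-1) * ∑ r ∈ Finset.range ℓ, be ℓ x (j * ℓ + r)
      = (if j = 0 then 1 else x * al x (j * ℓ - 1))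
          * (∑ r ∈ Finset.range (ℓ-1), x ^ r * vv x (ℓ-2-r))
        + vv x (ℓ-1) * al x (j * ℓ + (ℓ - 1)) := by
  set e : ℝ := if j = 0 then 1 else x * al x (j * ℓ - 1) with he
  have hcore : ∀ r, r ≤ ℓ-2 →
      vv x (ℓ-1) * be ℓ x (j * ℓ + r) = e * x ^ r * vv x (ℓ-2-r) := by
    refine core_block hℓ hx0 hx (fun r => be ℓ x (j * ℓ + r)) e ?_ ?_ ?_
    · -- top
      have h1 : (j * ℓ + (ℓ-2)) % ℓ = ℓ-2 := by
        rw [add_comm, Nat.add_mul_mod_self_right]; exact Nat.mod_eq_of_lt (by omega)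
      have h2 := be_rec_top hℓ hx0 hx (j * ℓ + (ℓ-2)) h1
      rwa [Nat.add_sub_assoc (by omega : 1 ≤ ℓ-2), show ℓ-2-1 = ℓ-3 by omega] at h2
    · -- mid
      intro r hr
      have hm0 : j * ℓ + (r+1) ≠ 0 := by
        rw [← add_assoc]; exact Nat.succ_ne_zero _
      have hmod : (j * ℓ + (r+1)) % ℓ = r+1 := by
        rw [add_comm, Nat.add_mul_mod_self_right]; exact Nat.mod_eq_of_lt (by omega)
      have h2 := be_rec_mid hℓ hx0 hx (j * ℓ + (r+1)) hm0
        (by rw [hmod]; omega) (by rw [hmod]; omega)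
      rwa [Nat.add_sub_assoc (by omega : 1 ≤ r+1), Nat.add_sub_cancel,
        add_assoc] at h2
    · -- bottom
      rcases Nat.eq_zero_or_pos j with rfl | hj
      · have h2 := be_rec_zero hℓ hx0 hx
        simpa [he] using h2
      · obtain ⟨j', rfl⟩ : ∃ j', j = j' + 1 := ⟨j - 1, by omega⟩
        have hml : (j' + 1) * ℓ = j' * ℓ + ℓ := Nat.succ_mul j' ℓ
        have hm0 : (j' + 1) * ℓ ≠ 0 := by
          rw [hml]; omega
        have hmod : ((j' + 1) * ℓ) % ℓ = 0 := Nat.mul_mod_left (j'+1) ℓ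
        have h2 := be_rec_mid hℓ hx0 hx ((j'+1) * ℓ) hm0
          (by rw [hmod]; omega) (by rw [hmod]; omega)
        have hsub : (j' + 1) * ℓ - 1 = j' * ℓ + (ℓ - 1) := by
          rw [hml, Nat.add_sub_assoc (by omega : 1 ≤ ℓ)]
        have hmod2 : (j' * ℓ + (ℓ - 1)) % ℓ = ℓ - 1 := by
          rw [add_comm, Nat.add_mul_mod_self_right]; exact Nat.mod_eq_of_lt (by omega)
        have hal : be ℓ x ((j'+1) * ℓ - 1) = al x ((j'+1) * ℓ - 1) := by
          rw [hsub]; exact be_eq_al _ hmod2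
        rw [hal] at h2
        show be ℓ x ((j'+1) * ℓ + 0) = e + x * be ℓ x ((j'+1) * ℓ + 1)
        rw [add_zero, h2, he, if_neg (Nat.succ_ne_zero j')]
  have hmod19 : (j * ℓ + (ℓ - 1)) % ℓ = ℓ - 1 := by
    rw [add_comm, Nat.add_mul_mod_self_right]; exact Nat.mod_eq_of_lt (by omega)
  have hsplit : Finset.range ℓ = Finset.range ((ℓ-1)+1) := by congr 1; omega
  calc vv x (ℓ-1) * ∑ r ∈ Finset.range ℓ, be ℓ x (j * ℓ + r)
      = vv x (ℓ-1) * ((∑ r ∈ Finset.range (ℓ-1), be ℓ x (j * ℓ + r))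
          + be ℓ x (j * ℓ + (ℓ-1))) := by rw [hsplit, Finset.sum_range_succ]
    _ = (∑ r ∈ Finset.range (ℓ-1), vv x (ℓ-1) * be ℓ x (j * ℓ + r))
          + vv x (ℓ-1) * al x (j * ℓ + (ℓ-1)) := by
        rw [mul_add, Finset.mul_sum, be_eq_al _ hmod19]
    _ = e * (∑ r ∈ Finset.range (ℓ-1), x ^ r * vv x (ℓ-2-r))
          + vv x (ℓ-1) * al x (j * ℓ + (ℓ-1)) := by
        congr 1
        rw [Finset.mul_sum]
        refine Finset.sum_congr rfl fun r hr => ?_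
        rw [hcore r (by have := Finset.mem_range.mp hr; omega)]
        ring

end Blocks

/-- For `ℓ ≥ 3` and `0 < x < 1/2`:
`x·U_{ℓ−1}(1/(2x))·Σ_n b(n)xⁿ = x·(Σ_{k=0}^{ℓ−1} U_k(1/(2x)))·Σ_n c(n,ℓ−1)xⁿ
 + Σ_{k=0}^{ℓ−2} U_k(1/(2x))`, all series converging absolutely. -/
theorem stmt16 (ℓ : ℕ) (hℓ : 3 ≤ ℓ) (x : ℝ) (hx0 : 0 < x) (hx : x < 1/2) :
    Summable (fun n : ℕ => (bSum ℓ n : ℝ) * x ^ n) ∧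
    Summable (fun n : ℕ => (cc ℓ n (ℓ - 1) : ℝ) * x ^ n) ∧
    x * (Polynomial.Chebyshev.U ℝ ((ℓ : ℤ) - 1)).eval (1 / (2 * x)) *
        ∑' n : ℕ, (bSum ℓ n : ℝ) * x ^ n =
      x * (∑ k ∈ Finset.range ℓ, (Polynomial.Chebyshev.U ℝ (k : ℤ)).eval (1 / (2 * x))) *
          (∑' n : ℕ, (cc ℓ n (ℓ - 1) : ℝ) * x ^ n) +
        ∑ k ∈ Finset.range (ℓ - 1), (Polynomial.Chebyshev.U ℝ (k : ℤ)).eval (1 / (2 * x)) := by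
  have hxne : x ≠ 0 := ne_of_gt hx0
  obtain ⟨hBsm, hBeq⟩ := fubini_b hℓ hx0 hx
  obtain ⟨hCsm, hCeq⟩ := fubini_c hℓ hx0 hx
  refine ⟨hBsm, hCsm, ?_⟩
  obtain ⟨L, rfl⟩ : ∃ L, ℓ = L + 3 := ⟨ℓ - 3, by omega⟩
  set y : ℝ := 1 / (2 * x) with hy
  set u : ℕ → ℝ := fun k => (Polynomial.Chebyshev.U ℝ (k : ℤ)).eval y with hu
  set B : ℝ := ∑' n : ℕ, (bSum (L+3) n : ℝ) * x ^ n with hB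
  set C : ℝ := ∑' n : ℕ, (cc (L+3) n (L+3-1) : ℝ) * x ^ n with hC
  set C' : ℝ := ∑' j : ℕ, al x (j * (L+3) + (L+2)) with hC'
  have halsm : Summable fun j : ℕ => al x (j * (L+3) + (L+3-1)) :=
    al_summable_shift hℓ hx0 hx
  rw [show L+3-1 = L+2 from rfl] at halsm hCeq
  have hCC' : C = C' := hCeq
  -- the e-sequence
  set ee : ℕ → ℝ := fun j => if j = 0 then 1 else x * al x (j * (L+3) - 1) with hee
  have heeshift : (fun j : ℕ => ee (j+1)) = fun j : ℕ => x * al x (j * (L+3) + (L+2)) := by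
    funext j
    simp only [hee, if_neg (Nat.succ_ne_zero j)]
    congr 2
    rw [Nat.succ_mul, Nat.add_sub_assoc (by omega)]
    omega
  have heesm : Summable ee := by
    rw [← summable_nat_add_iff 1, heeshift]
    exact halsm.mul_left x
  -- key identity
  set P : ℝ := vv x (L+2) with hP
  set R : ℝ := ∑ r ∈ Finset.range (L+2), x ^ r * vv x (L+1-r) with hR
  have hblock : ∀ j : ℕ,
      P * ∑ r ∈ Finset.range (L+3), be (L+3) x (j * (L+3) + r)
        = ee j * R + P * al x (j * (L+3) + (L+2)) := by
    intro j
    have h := block_eq hℓ hx0 hx (j := j)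
    rw [show L+3-1 = L+2 from rfl, show L+3-2 = L+1 from rfl] at h
    exact h
  have hSsm : Summable fun j : ℕ => ∑ r ∈ Finset.range (L+3), be (L+3) x (j * (L+3) + r) := by
    refine Summable.of_nonneg_of_le
      (fun j => Finset.sum_nonneg fun r _ => be_nonneg _ hx0 _) (fun j => ?_)
      (((summable_geometric_of_lt_one (by linarith : (0:ℝ) ≤ 2*x)
        (by linarith : 2*x < 1)).mul_right ((1-2*x)⁻¹)).mul_left (L+3 : ℝ))
    calc ∑ r ∈ Finset.range (L+3), be (L+3) x (j * (L+3) + r)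
        ≤ (Finset.range (L+3)).card • ((2*x) ^ j * (1-2*x)⁻¹) := by
          refine Finset.sum_le_card_nsmul _ _ _ fun r _ => ?_
          calc be (L+3) x (j * (L+3) + r)
              ≤ (2*x) ^ (j * (L+3) + r) * (1-2*x)⁻¹ := be_le hx0 hx _
            _ ≤ (2*x) ^ j * (1-2*x)⁻¹ := by
                refine mul_le_mul_of_nonneg_right
                  (pow_le_pow_of_le_one (by linarith) (by linarith) ?_)
                  (inv_nonneg.mpr (by linarith))
                exact le_trans (Nat.le_mul_of_pos_right j (by omega)) (Nat.le_add_right _ _)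
      _ = (L+3 : ℝ) * ((2*x) ^ j * (1-2*x)⁻¹) := by
          rw [Finset.card_range, nsmul_eq_mul]
          push_cast
          ring
  have hPB : P * B = R * (1 + x * C') + P * C' := by
    rw [hBeq, regroup hℓ hx0 hx, ← tsum_mul_left, tsum_congr hblock,
      Summable.tsum_add (heesm.mul_right R) (halsm.mul_left P), tsum_mul_right, tsum_mul_left,
      Summable.tsum_eq_zero_add heesm, heeshift, tsum_mul_left]
    rw [show ee 0 = 1 by simp [hee]]
    rw [hC']
    ring
  -- Chebyshev conversion
  have hvv : ∀ k : ℕ, vv x k = x ^ k * u k := fun k => vv_eq_cheb hx0 k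
  have hRT : R = x ^ (L+1) * ∑ k ∈ Finset.range (L+2), u k := by
    rw [hR]
    rw [show (∑ r ∈ Finset.range (L+2), x ^ r * vv x (L+1-r))
        = ∑ r ∈ Finset.range (L+2), (fun k => x ^ (L+1-k) * vv x k) ((L+2) - 1 - r) from
      Finset.sum_congr rfl fun r hr => by
        have hr' := Finset.mem_range.mp hr
        simp only
        rw [show L+2-1-r = L+1-r from rfl, show L+1-(L+1-r) = r by omega]]
    rw [Finset.sum_range_reflect (fun k => x ^ (L+1-k) * vv x k) (L+2)]
    rw [Finset.mul_sum]
    refine Finset.sum_congr rfl fun k hk => ?_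
    have hk' := Finset.mem_range.mp hk
    rw [hvv k, ← mul_assoc, ← pow_add, show L+1-k+k = L+1 by omega]
  have hPu : P = x ^ (L+2) * u (L+2) := by rw [hP, hvv]
  have hu' : (Polynomial.Chebyshev.U ℝ ((↑(L+3) : ℤ) - 1)).eval y = u (L+2) := by
    rw [hu]
    congr 2
    push_cast
    ring
  have hgoalT : ∑ k ∈ Finset.range (L+3-1), (Polynomial.Chebyshev.U ℝ (k : ℤ)).eval y
      = ∑ k ∈ Finset.range (L+2), u k := rfl
  have hgoalS : ∑ k ∈ Finset.range (L+3), (Polynomial.Chebyshev.U ℝ (k : ℤ)).eval y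
      = (∑ k ∈ Finset.range (L+2), u k) + u (L+2) := by
    rw [Finset.sum_range_succ]
  rw [hu', hgoalT, hgoalS, hCC']
  apply mul_left_cancel₀ (pow_ne_zero (L+1) hxne)
  calc x ^ (L+1) * (x * u (L+2) * B) = (x ^ (L+2) * u (L+2)) * B := by ring
    _ = P * B := by rw [hPu]
    _ = R * (1 + x * C') + P * C' := hPB
    _ = x ^ (L+1) * (x * ((∑ k ∈ Finset.range (L+2), u k) + u (L+2)) * C'
          + ∑ k ∈ Finset.range (L+2), u k) := by
        rw [hRT, hPu]
        ring
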